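/- Let E be a real inner product space, let Ŷ, W, Y₂, G₂ ∈ E, and let b₁, b₂ > 0 satisfy 1 − 1/(2b₁) − 1/(2b₂) > 0. Assume ‖Ŷ − (Ŷ + b₁Y₂)‖ ≤ ‖W − (Ŷ + b₁Y₂)‖ and ‖W − (W + b₂G₂)‖ ≤ ‖Ŷ − (W + b₂G₂)‖. Then (1 − 1/(2b₁) − 1/(2b₂))·‖Ŷ − W‖ ≤ ‖(Ŷ + Y₂) − (W + G₂)‖. -/

import Mathlib

open scoped RealInnerProductSpace

theorem stmt_12 {E : Type*} [NormedAddCommGroup E] [InnerProductSpace ℝ E]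
    (Yhat W Y₂ G₂ : E) (b₁ b₂ : ℝ) (hb₁ : 0 < b₁) (hb₂ : 0 < b₂)
    (hb : 0 < 1 - 1 / (2 * b₁) - 1 / (2 * b₂))
    (h1 : ‖Yhat - (Yhat + b₁ • Y₂)‖ ≤ ‖W - (Yhat + b₁ • Y₂)‖)
    (h2 : ‖W - (W + b₂ • G₂)‖ ≤ ‖Yhat - (W + b₂ • G₂)‖) :
    (1 - 1 / (2 * b₁) - 1 / (2 * b₂)) * ‖Yhat - W‖ ≤ ‖(Yhat + Y₂) - (W + G₂)‖ := by
  rcases eq_or_ne Yhat W with rfl | hne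
  · simpa using mul_nonneg hb.le (norm_nonneg (0 : E)) |>.trans_eq (by simp) |>.trans
      (norm_nonneg _)
  set d := Yhat - W with hdd
  have hd : 0 < ‖d‖ := by
    simpa [hdd, sub_eq_zero] using norm_pos_iff.mpr (sub_ne_zero.mpr hne)
  -- squared versions
  have h1' : ‖Yhat - (Yhat + b₁ • Y₂)‖ ^ 2 ≤ ‖W - (Yhat + b₁ • Y₂)‖ ^ 2 := by
    exact pow_le_pow_left₀ (norm_nonneg _) h1 2
  have h2' : ‖W - (W + b₂ • G₂)‖ ^ 2 ≤ ‖Yhat - (W + b₂ • G₂)‖ ^ 2 := by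
    exact pow_le_pow_left₀ (norm_nonneg _) h2 2
  have e1 : Yhat - (Yhat + b₁ • Y₂) = -(b₁ • Y₂) := by abel
  have e2 : W - (Yhat + b₁ • Y₂) = -d - b₁ • Y₂ := by rw [hdd]; abel
  have e3 : W - (W + b₂ • G₂) = -(b₂ • G₂) := by abel
  have e4 : Yhat - (W + b₂ • G₂) = d - b₂ • G₂ := by rw [hdd]; abel
  rw [e1, e2, norm_neg, norm_sub_sq_real] at h1'
  rw [e3, e4, norm_neg, norm_sub_sq_real] at h2'
  simp only [norm_neg] at h1'
  rw [inner_neg_left, inner_smul_right, real_inner_comm] at h1'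
  rw [inner_smul_right, real_inner_comm] at h2'
  have hi1 : -(‖d‖ ^ 2) ≤ 2 * b₁ * ⟪d, Y₂⟫ := by nlinarith [norm_nonneg d, real_inner_comm d Y₂, real_inner_comm d G₂]
  have hi2 : 2 * b₂ * ⟪d, G₂⟫ ≤ ‖d‖ ^ 2 := by nlinarith [norm_nonneg d, real_inner_comm d Y₂, real_inner_comm d G₂]
  have e5 : (Yhat + Y₂) - (W + G₂) = d + Y₂ - G₂ := by rw [hdd]; abel
  have key : ⟪d, d + Y₂ - G₂⟫ = ‖d‖ ^ 2 + ⟪d, Y₂⟫ - ⟪d, G₂⟫ := by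
    rw [inner_sub_right, inner_add_right, real_inner_self_eq_norm_sq]
  have hle : ⟪d, d + Y₂ - G₂⟫ ≤ ‖d‖ * ‖d + Y₂ - G₂‖ := real_inner_le_norm _ _
  rw [e5]
  rw [key] at hle
  have hlb : (1 - 1 / (2 * b₁) - 1 / (2 * b₂)) * ‖d‖ ^ 2
      ≤ ‖d‖ ^ 2 + ⟪d, Y₂⟫ - ⟪d, G₂⟫ := by
    have h1'' : -(‖d‖ ^ 2) / (2 * b₁) ≤ ⟪d, Y₂⟫ := by
      rw [div_le_iff₀ (by positivity)]; nlinarith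
    have h2'' : ⟪d, G₂⟫ ≤ ‖d‖ ^ 2 / (2 * b₂) := by
      rw [le_div_iff₀ (by positivity)]; nlinarith
    have hexp : (1 - 1 / (2 * b₁) - 1 / (2 * b₂)) * ‖d‖ ^ 2
        = ‖d‖ ^ 2 + (-(‖d‖ ^ 2) / (2 * b₁)) - ‖d‖ ^ 2 / (2 * b₂) := by
      field_simp; ring
    rw [hexp]
    linarith
  have := hlb.trans hle
  have hfin : (1 - 1 / (2 * b₁) - 1 / (2 * b₂)) * ‖d‖ * ‖d‖ ≤ ‖d‖ * ‖d + Y₂ - G₂‖ := by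
    nlinarith
  calc (1 - 1 / (2 * b₁) - 1 / (2 * b₂)) * ‖d‖
      ≤ ‖d + Y₂ - G₂‖ := by
        have := (mul_le_mul_iff_of_pos_right hd).mp (by linarith [hfin] :
          ((1 - 1 / (2 * b₁) - 1 / (2 * b₂)) * ‖d‖) * ‖d‖ ≤ ‖d + Y₂ - G₂‖ * ‖d‖)
        exact this
    _ = ‖d + Y₂ - G₂‖ := rfl
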